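/- Let ν be a Borel probability measure on [0,1] and m ∈ [0,1] with ν([0,m]) > 0 and ν([m,1]) > 0. Then F^m_ν = {[f]_ν : f ∈ F^m} is a closed subset of L²(ν): if f_n ∈ F^m and ‖f_n − f‖_{L²(ν)} → 0 for some f ∈ L²(ν), then there exists g ∈ F^m with f = g ν-almost everywhere. -/

import Mathlib

open MeasureTheory Filter

lemma convexOn_congr {s : Set ℝ} {f g : ℝ → ℝ} (hf : ConvexOn ℝ s f)
    (h : ∀ x ∈ s, f x = g x) : ConvexOn ℝ s g := by
  refine ⟨hf.1, fun x hx y hy p q hp hq hpq => ?_⟩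
  rw [← h x hx, ← h y hy, ← h _ (hf.1 hx hy hp hq hpq)]
  exact hf.2 hx hy hp hq hpq

lemma concaveOn_congr {s : Set ℝ} {f g : ℝ → ℝ} (hf : ConcaveOn ℝ s f)
    (h : ∀ x ∈ s, f x = g x) : ConcaveOn ℝ s g := by
  refine ⟨hf.1, fun x hx y hy p q hp hq hpq => ?_⟩
  rw [← h x hx, ← h y hy, ← h _ (hf.1 hx hy hp hq hpq)]
  exact hf.2 hx hy hp hq hpq

lemma convexOn_raise_right {a c : ℝ} {g₁ g : ℝ → ℝ} (h : ConvexOn ℝ (Set.Icc a c) g₁)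
    (heq : ∀ x, x < c → g x = g₁ x) (hle : g₁ c ≤ g c) : ConvexOn ℝ (Set.Icc a c) g := by
  refine ⟨convex_Icc a c, fun x hx y hy p q hp hq hpq => ?_⟩
  have hg : ∀ t, t ≤ c → g₁ t ≤ g t := by
    intro t ht
    rcases lt_or_eq_of_le ht with h' | h'
    · rw [heq t h']
    · subst h'; exact hle
  have hz : p • x + q • y ∈ Set.Icc a c := h.1 hx hy hp hq hpq
  rcases lt_or_eq_of_le hz.2 with h' | h'
  · rw [heq _ h']
    refine (h.2 hx hy hp hq hpq).trans ?_
    simp only [smul_eq_mul]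
    have := mul_le_mul_of_nonneg_left (hg x hx.2) hp
    have := mul_le_mul_of_nonneg_left (hg y hy.2) hq
    linarith
  · -- p•x+q•y = c
    simp only [smul_eq_mul] at h' ⊢
    have e1 : p * (c - x) + q * (c - y) = 0 := by linear_combination c * hpq - h'
    have e2 : 0 ≤ p * (c - x) := mul_nonneg hp (by linarith [hx.2])
    have e3 : 0 ≤ q * (c - y) := mul_nonneg hq (by linarith [hy.2])
    have e4 : p * (c - x) = 0 := by linarith
    have e5 : q * (c - y) = 0 := by linarith
    rw [h']
    rcases mul_eq_zero.mp e4 with hp0 | hxc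
    · rcases mul_eq_zero.mp e5 with hq0 | hyc
      · exfalso; rw [hp0, hq0] at hpq; norm_num at hpq
      · have hyc' : y = c := by linarith [sub_eq_zero.mp hyc]
        have hq1 : q = 1 := by rw [hp0] at hpq; linarith
        rw [hp0, hq1, hyc']; ring_nf; simp
    · have hxc' : x = c := by linarith [sub_eq_zero.mp hxc]
      rcases mul_eq_zero.mp e5 with hq0 | hyc
      · have hp1 : p = 1 := by rw [hq0] at hpq; linarith
        rw [hq0, hp1, hxc']; ring_nf; simp
      · have hyc' : y = c := by linarith [sub_eq_zero.mp hyc]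
        rw [hxc', hyc']
        have hgc : p * g c + q * g c = g c := by linear_combination g c * hpq
        linarith

lemma concaveOn_lower_left {c b : ℝ} {g₂ g : ℝ → ℝ} (h : ConcaveOn ℝ (Set.Icc c b) g₂)
    (heq : ∀ x, c < x → g x = g₂ x) (hle : g c ≤ g₂ c) : ConcaveOn ℝ (Set.Icc c b) g := by
  refine ⟨convex_Icc c b, fun x hx y hy p q hp hq hpq => ?_⟩
  have hg : ∀ t, c ≤ t → g t ≤ g₂ t := by
    intro t ht
    rcases lt_or_eq_of_le ht with h' | h'
    · rw [heq t h']
    · rw [← h']; exact hle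
  have hz : p • x + q • y ∈ Set.Icc c b := h.1 hx hy hp hq hpq
  rcases lt_or_eq_of_le hz.1 with h' | h'
  · rw [heq _ h']
    refine le_trans ?_ (h.2 hx hy hp hq hpq)
    simp only [smul_eq_mul]
    have := mul_le_mul_of_nonneg_left (hg x hx.1) hp
    have := mul_le_mul_of_nonneg_left (hg y hy.1) hq
    linarith
  · simp only [smul_eq_mul] at h' ⊢
    have e1 : p * (x - c) + q * (y - c) = 0 := by linear_combination (-1 : ℝ) * h' - c * hpq
    have e2 : 0 ≤ p * (x - c) := mul_nonneg hp (by linarith [hx.1])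
    have e3 : 0 ≤ q * (y - c) := mul_nonneg hq (by linarith [hy.1])
    have e4 : p * (x - c) = 0 := by linarith
    have e5 : q * (y - c) = 0 := by linarith
    rw [← h']
    rcases mul_eq_zero.mp e4 with hp0 | hxc
    · rcases mul_eq_zero.mp e5 with hq0 | hyc
      · exfalso; rw [hp0, hq0] at hpq; norm_num at hpq
      · have hyc' : y = c := by linarith [sub_eq_zero.mp hyc]
        have hq1 : q = 1 := by rw [hp0] at hpq; linarith
        rw [hp0, hq1, hyc']; ring_nf; simp
    · have hxc' : x = c := by linarith [sub_eq_zero.mp hxc]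
      rcases mul_eq_zero.mp e5 with hq0 | hyc
      · have hp1 : p = 1 := by rw [hq0] at hpq; linarith
        rw [hq0, hp1, hxc']; ring_nf; simp
      · have hyc' : y = c := by linarith [sub_eq_zero.mp hyc]
        rw [hxc', hyc']
        have hgc : p * g c + q * g c = g c := by linear_combination g c * hpq
        linarith

open scoped ENNReal NNReal

lemma sup_affine_interp {a c γ : ℝ} {A : Set ℝ} {f : ℝ → ℝ}
    (hA : A.Nonempty) (hsub : A ⊆ Set.Ico a c)
    (h1 : ∀ u ∈ A, f u ≤ γ)
    (h2 : ∀ v ∈ A, ∀ u ∈ A, v < u → (f u - f v) / (u - v) ≤ (γ - f u) / (c - u))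
    (h3 : ∀ v ∈ A, ∀ u ∈ A, ∀ z ∈ A, v < u → u < z →
      (f u - f v) / (u - v) ≤ (f z - f u) / (z - u))
    (h4 : ∀ v ∈ A, ∀ u ∈ A, v ≤ u → f v ≤ f u) :
    ∃ g : ℝ → ℝ, ConvexOn ℝ (Set.Icc a c) g ∧ MonotoneOn g (Set.Icc a c) ∧
      (∀ x ∈ Set.Icc a c, g x ≤ γ) ∧ ∀ u ∈ A, g u = f u := by
  classical
  set T : ℝ → Set ℝ := fun u => insert 0 ((fun v => (f u - f v) / (u - v)) '' (A ∩ Set.Iio u))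
    with hT
  set s : ℝ → ℝ := fun u => sSup (T u) with hs
  have hcu : ∀ u ∈ A, u < c := fun u hu => (hsub hu).2
  have hub : ∀ u ∈ A, ∀ y ∈ T u, y ≤ (γ - f u) / (c - u) := by
    intro u hu y hy
    rcases Set.mem_insert_iff.mp hy with rfl | hy
    · exact div_nonneg (by linarith [h1 u hu]) (by linarith [hcu u hu])
    · obtain ⟨v, ⟨hvA, hvu⟩, rfl⟩ := hy
      exact h2 v hvA u hu hvu
  have hTne : ∀ u, (T u).Nonempty := fun u => ⟨0, Set.mem_insert _ _⟩
  have hTbdd : ∀ u ∈ A, BddAbove (T u) := fun u hu => ⟨_, fun y hy => hub u hu y hy⟩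
  have hs0 : ∀ u ∈ A, 0 ≤ s u := fun u hu => le_csSup (hTbdd u hu) (Set.mem_insert _ _)
  have hsle : ∀ u ∈ A, s u ≤ (γ - f u) / (c - u) := fun u hu => csSup_le (hTne u) (hub u hu)
  have hsge : ∀ u ∈ A, ∀ v ∈ A, v < u → (f u - f v) / (u - v) ≤ s u := fun u hu v hv hvu =>
    le_csSup (hTbdd u hu) (Set.mem_insert_of_mem _ ⟨v, ⟨hv, hvu⟩, rfl⟩)
  have hsles : ∀ u ∈ A, ∀ z ∈ A, u < z → s u ≤ (f z - f u) / (z - u) := by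
    intro u hu z hz huz
    refine csSup_le (hTne u) ?_
    intro y hy
    rcases Set.mem_insert_iff.mp hy with rfl | hy
    · exact div_nonneg (by linarith [h4 u hu z hz huz.le]) (by linarith)
    · obtain ⟨v, ⟨hvA, hvu⟩, rfl⟩ := hy
      exact h3 v hvA u hu z hz hvu huz
  set L : ℝ → ℝ → ℝ := fun u x => f u + s u * (x - u) with hL
  have hLmono : ∀ u ∈ A, ∀ x y : ℝ, x ≤ y → L u x ≤ L u y := by
    intro u hu x y hxy
    simp only [hL]
    have := mul_le_mul_of_nonneg_left (by linarith : x - u ≤ y - u) (hs0 u hu)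
    linarith
  have hLle : ∀ u ∈ A, ∀ x : ℝ, x ≤ c → L u x ≤ γ := by
    intro u hu x hx
    refine (hLmono u hu x c hx).trans ?_
    simp only [hL]
    have h5 := mul_le_mul_of_nonneg_right (hsle u hu) (by linarith [hcu u hu] : (0:ℝ) ≤ c - u)
    rw [div_mul_cancel₀] at h5
    · linarith
    · have := hcu u hu; intro h0; rw [sub_eq_zero] at h0; linarith
  have hLf : ∀ u ∈ A, ∀ w ∈ A, L u w ≤ f w := by
    intro u hu w hw
    rcases lt_trichotomy u w with h' | h' | h'
    · have h5 := mul_le_mul_of_nonneg_right (hsles u hu w hw h') (by linarith : (0:ℝ) ≤ w - u)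
      rw [div_mul_cancel₀] at h5
      · simp only [hL]; linarith
      · intro h0; rw [sub_eq_zero] at h0; linarith
    · subst h'; simp [hL]
    · have h5 := hsge u hu w hw h'
      rw [div_le_iff₀ (by linarith : (0:ℝ) < u - w)] at h5
      simp only [hL]; nlinarith
  set g : ℝ → ℝ := fun x => sSup ((fun u => L u x) '' A) with hg
  have hgne : ∀ x : ℝ, ((fun u => L u x) '' A).Nonempty := fun x => hA.image _
  have hgbdd : ∀ x : ℝ, x ≤ c → BddAbove ((fun u => L u x) '' A) := by
    intro x hx
    refine ⟨γ, ?_⟩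
    rintro y ⟨u, hu, rfl⟩
    exact hLle u hu x hx
  have hgeq : ∀ u ∈ A, g u = f u := by
    intro u hu
    refine le_antisymm (csSup_le (hgne u) ?_) ?_
    · rintro y ⟨w, hw, rfl⟩; exact hLf w hw u hu
    · have : L u u = f u := by simp [hL]
      rw [← this]
      exact le_csSup (hgbdd u (hcu u hu).le) ⟨u, hu, rfl⟩
  have hgle : ∀ x ∈ Set.Icc a c, g x ≤ γ := by
    intro x hx
    refine csSup_le (hgne x) ?_
    rintro y ⟨u, hu, rfl⟩
    exact hLle u hu x hx.2
  have hgmono : MonotoneOn g (Set.Icc a c) := by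
    intro x hx y hy hxy
    refine csSup_le (hgne x) ?_
    rintro e ⟨u, hu, rfl⟩
    exact (hLmono u hu x y hxy).trans (le_csSup (hgbdd y hy.2) ⟨u, hu, rfl⟩)
  refine ⟨g, ⟨convex_Icc a c, ?_⟩, hgmono, hgle, hgeq⟩
  intro x hx y hy p q hp hq hpq
  have hz : p • x + q • y ∈ Set.Icc a c := (convex_Icc a c) hx hy hp hq hpq
  simp only [smul_eq_mul]
  refine csSup_le (hgne _) ?_
  rintro e ⟨u, hu, rfl⟩
  show L u (p * x + q * y) ≤ p * g x + q * g y
  have key : L u (p * x + q * y) = p * L u x + q * L u y := by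
    simp only [hL]; ring_nf
    linear_combination (f u + s u * (-u)) * hpq.symm
  rw [key]
  have l1 : L u x ≤ g x := le_csSup (hgbdd x hx.2) ⟨u, hu, rfl⟩
  have l2 : L u y ≤ g y := le_csSup (hgbdd y hy.2) ⟨u, hu, rfl⟩
  have := mul_le_mul_of_nonneg_left l1 hp
  have := mul_le_mul_of_nonneg_left l2 hq
  linarith

/-- Proposition `clconv`(c), sufficiency of condition (i): if `ν([0,m]) > 0`
and `ν([m,1]) > 0`, then `F^m_ν` is closed in `L²(ν)`. -/
theorem stmt13 (ν : Measure ℝ) [IsProbabilityMeasure ν]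
    (hν : ν (Set.Icc (0 : ℝ) 1)ᶜ = 0)
    (m : ℝ) (hm : m ∈ Set.Icc (0 : ℝ) 1)
    (h1 : 0 < ν (Set.Icc 0 m)) (h2 : 0 < ν (Set.Icc m 1))
    (f : ℝ → ℝ) (hf : MemLp f 2 ν)
    (fn : ℕ → ℝ → ℝ)
    (hfn : ∀ n, ConvexOn ℝ (Set.Icc 0 m) (fn n) ∧ ConcaveOn ℝ (Set.Icc m 1) (fn n) ∧
      MonotoneOn (fn n) (Set.Icc (0 : ℝ) 1))
    (hconv : Tendsto (fun n => ∫ x, (fn n x - f x) ^ 2 ∂ν) atTop (nhds 0)) :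
    ∃ g : ℝ → ℝ,
      (ConvexOn ℝ (Set.Icc 0 m) g ∧ ConcaveOn ℝ (Set.Icc m 1) g ∧
        MonotoneOn g (Set.Icc (0 : ℝ) 1)) ∧ f =ᵐ[ν] g := by
  classical
  set cl : ℝ → ℝ := fun x => min 1 (max x 0) with hcl
  have hcl_mem : ∀ x, cl x ∈ Set.Icc (0:ℝ) 1 := fun x =>
    ⟨le_min (by norm_num) (le_max_right _ _), min_le_left _ _⟩
  have hcl_mono : Monotone cl := fun x y h => min_le_min le_rfl (max_le_max h le_rfl)
  have hcl_id : ∀ x ∈ Set.Icc (0:ℝ) 1, cl x = x := by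
    intro x hx
    simp only [hcl]
    rw [max_eq_left hx.1, min_eq_right hx.2]
  set F : ℕ → ℝ → ℝ := fun n x => fn n (cl x) with hF
  have hFmono : ∀ n, Monotone (F n) := fun n x y h =>
    (hfn n).2.2 (hcl_mem x) (hcl_mem y) (hcl_mono h)
  have hFmeas : ∀ n, Measurable (F n) := fun n => (hFmono n).measurable
  have hFeq : ∀ n, ∀ x ∈ Set.Icc (0:ℝ) 1, F n x = fn n x := by
    intro n x hx; simp only [hF]; rw [hcl_id x hx]
  have hae01 : ∀ᵐ x ∂ν, x ∈ Set.Icc (0:ℝ) 1 := by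
    rw [ae_iff]
    exact measure_mono_null (fun x hx => hx) hν
  have hFmem : ∀ n, MemLp (F n) 2 ν := by
    intro n
    refine MemLp.of_bound ((hFmeas n).aestronglyMeasurable) (max |fn n 0| |fn n 1|)
      (Eventually.of_forall fun x => ?_)
    have h5 : fn n 0 ≤ F n x := (hfn n).2.2 (Set.left_mem_Icc.2 (by norm_num)) (hcl_mem x)
      (hcl_mem x).1
    have h6 : F n x ≤ fn n 1 := (hfn n).2.2 (hcl_mem x) (Set.right_mem_Icc.2 (by norm_num))
      (hcl_mem x).2
    rw [Real.norm_eq_abs, abs_le]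
    constructor
    · have := neg_abs_le (fn n 0)
      have := le_max_left |fn n 0| |fn n 1|
      linarith
    · have := le_abs_self (fn n 1)
      have := le_max_right |fn n 0| |fn n 1|
      linarith
  have hFf : ∀ n, MemLp (F n - f) 2 ν := fun n => (hFmem n).sub hf
  have hI : Tendsto (fun n => ∫ x, (F n x - f x) ^ 2 ∂ν) atTop (nhds 0) := by
    refine hconv.congr fun n => integral_congr_ae ?_
    filter_upwards [hae01] with x hx
    rw [hFeq n x hx]
  have hInn : ∀ n, 0 ≤ ∫ x, (F n x - f x) ^ 2 ∂ν := fun n =>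
    integral_nonneg fun x => sq_nonneg _
  -- identify eLpNorm with the integral
  have hJ : ∀ n, eLpNorm (F n - f) 2 ν
      = (ENNReal.ofReal (∫ x, (F n x - f x) ^ 2 ∂ν)) ^ ((1:ℝ)/2) := by
    intro n
    have hmeas : AEStronglyMeasurable (F n - f) ν := (hFf n).1
    have e1 : eLpNorm (F n - f) 2 ν
        = (∫⁻ x, (‖(F n - f) x‖₊ : ℝ≥0∞) ^ (2:ℝ) ∂ν) ^ ((1:ℝ)/2) := by
      rw [eLpNorm_eq_lintegral_rpow_enorm_toReal (by norm_num) (by norm_num)]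
      norm_num [ENNReal.toReal_ofNat]
      rfl
    have e2 : ∀ x : ℝ, (‖(F n - f) x‖₊ : ℝ≥0∞) ^ (2:ℝ)
        = ENNReal.ofReal ((F n x - f x) ^ 2) := by
      intro x
      rw [← enorm_eq_nnnorm, Real.enorm_eq_ofReal_abs, ENNReal.ofReal_rpow_of_nonneg (abs_nonneg _) (by norm_num)]
      congr 1
      rw [show (2:ℝ) = ((2:ℕ):ℝ) by norm_num, Real.rpow_natCast, sq_abs]
      simp [Pi.sub_apply]
    have hsq : AEStronglyMeasurable (fun x => (F n x - f x) ^ 2) ν := by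
      refine (hmeas.mul hmeas).congr (Eventually.of_forall fun x => ?_)
      simp [Pi.sub_apply, pow_two]
    have e3 : ∫⁻ x, (‖(F n - f) x‖₊ : ℝ≥0∞) ^ (2:ℝ) ∂ν
        = ∫⁻ x, ENNReal.ofReal ((F n x - f x) ^ 2) ∂ν := lintegral_congr fun x => e2 x
    have e4 : ∫ x, (F n x - f x) ^ 2 ∂ν
        = (∫⁻ x, ENNReal.ofReal ((F n x - f x) ^ 2) ∂ν).toReal :=
      integral_eq_lintegral_of_nonneg_ae (Eventually.of_forall fun x => sq_nonneg _) hsq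
    have e5 : (∫⁻ x, ENNReal.ofReal ((F n x - f x) ^ 2) ∂ν) ≠ ⊤ := by
      have h7 := (hFf n).2
      rw [e1, e3] at h7
      exact ((ENNReal.rpow_lt_top_iff_of_pos (by norm_num : (0:ℝ) < 1/2)).mp h7).ne
    rw [e1, e3, e4, ENNReal.ofReal_toReal e5]
  have hT0 : Tendsto (fun n => eLpNorm (F n - f) 2 ν) atTop (nhds 0) := by
    simp only [hJ]
    rw [ENNReal.tendsto_nhds_zero]
    intro ε hε
    set δ : ℝ≥0∞ := min ε 1 with hδ
    have hδ0 : 0 < δ := lt_min hε (by norm_num)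
    have hδtop : δ ≠ ⊤ := ne_top_of_le_ne_top ENNReal.one_ne_top (min_le_right _ _)
    have hpow : (0:ℝ≥0∞) < δ ^ (2:ℝ) := ENNReal.rpow_pos hδ0 hδtop
    have h6 : Tendsto (fun n => ENNReal.ofReal (∫ x, (F n x - f x) ^ 2 ∂ν)) atTop (nhds 0) := by
      simpa using ENNReal.tendsto_ofReal hI
    have h7 := (ENNReal.tendsto_nhds_zero.mp h6) (δ ^ (2:ℝ)) hpow
    filter_upwards [h7] with n hn
    calc (ENNReal.ofReal (∫ x, (F n x - f x) ^ 2 ∂ν)) ^ ((1:ℝ)/2)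
        ≤ (δ ^ (2:ℝ)) ^ ((1:ℝ)/2) := ENNReal.rpow_le_rpow hn (by norm_num)
      _ = δ := by rw [← ENNReal.rpow_mul]; norm_num
      _ ≤ ε := min_le_left _ _
  have hTIM : TendstoInMeasure ν F atTop f :=
    tendstoInMeasure_of_tendsto_eLpNorm (p := 2) (by norm_num)
      (fun n => (hFmem n).1) hf.1 hT0
  obtain ⟨ns, hnsmono, hae⟩ := hTIM.exists_seq_tendsto_ae
  set G : ℕ → ℝ → ℝ := fun k => F (ns k) with hG
  set S : Set ℝ := Set.Icc 0 1 ∩ {x | Tendsto (fun k => G k x) atTop (nhds (f x))} with hS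
  have hSsub : S ⊆ Set.Icc (0:ℝ) 1 := Set.inter_subset_left
  have hStend : ∀ x ∈ S, Tendsto (fun k => G k x) atTop (nhds (f x)) := fun x hx => hx.2
  have hSnull : ν Sᶜ = 0 := by
    rw [hS, Set.compl_inter]
    refine measure_union_null hν ?_
    rw [Set.compl_setOf]
    exact ae_iff.mp hae
  have hGmono : ∀ k, Monotone (G k) := fun k => hFmono (ns k)
  have hGconv : ∀ k, ConvexOn ℝ (Set.Icc 0 m) (G k) := fun k =>
    convexOn_congr (hfn (ns k)).1
      (fun x hx => (hFeq (ns k) x (Set.Icc_subset_Icc_right hm.2 hx)).symm)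
  have hGconc : ∀ k, ConcaveOn ℝ (Set.Icc m 1) (G k) := fun k =>
    concaveOn_congr (hfn (ns k)).2.1
      (fun x hx => (hFeq (ns k) x (Set.Icc_subset_Icc_left hm.1 hx)).symm)
  have hSA : (S ∩ Set.Icc 0 m).Nonempty := by
    rcases Set.eq_empty_or_nonempty (S ∩ Set.Icc 0 m) with he | he
    · exfalso
      have hsub2 : Set.Icc 0 m ⊆ Sᶜ := fun x hx hxS =>
        Set.eq_empty_iff_forall_notMem.mp he x ⟨hxS, hx⟩
      exact absurd (measure_mono_null hsub2 hSnull) h1.ne'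
    · exact he
  have hSB : (S ∩ Set.Icc m 1).Nonempty := by
    rcases Set.eq_empty_or_nonempty (S ∩ Set.Icc m 1) with he | he
    · exfalso
      have hsub2 : Set.Icc m 1 ⊆ Sᶜ := fun x hx hxS =>
        Set.eq_empty_iff_forall_notMem.mp he x ⟨hxS, hx⟩
      exact absurd (measure_mono_null hsub2 hSnull) h2.ne'
    · exact he
  obtain ⟨a, haS, ha⟩ := hSA
  obtain ⟨b, hbS, hb⟩ := hSB
  have hmIcc : m ∈ Set.Icc (0:ℝ) m := Set.right_mem_Icc.2 hm.1
  have hmIcc' : m ∈ Set.Icc m 1 := Set.left_mem_Icc.2 hm.2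
  set γ : ℝ := liminf (fun k => G k m) atTop with hγ
  have hup : ∀ᶠ k in atTop, G k m ≤ f b + 1 := by
    have h8 : ∀ᶠ k in atTop, G k b ≤ f b + 1 :=
      (hStend b hbS).eventually_le_const (lt_add_one _)
    filter_upwards [h8] with k hk
    exact le_trans (hGmono k hb.1) hk
  have hlo : ∀ᶠ k in atTop, f a - 1 ≤ G k m := by
    have h8 : ∀ᶠ k in atTop, f a - 1 ≤ G k a :=
      (hStend a haS).eventually_const_le (by linarith)
    filter_upwards [h8] with k hk
    exact hk.trans (hGmono k ha.2)
  have hbddlo : IsBoundedUnder (· ≥ ·) atTop (fun k => G k m) :=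
    ⟨f a - 1, eventually_map.mpr hlo⟩
  have hcobdd : IsCoboundedUnder (· ≥ ·) atTop (fun k => G k m) :=
    isCoboundedUnder_ge_of_eventually_le atTop hup
  have hγ1 : ∀ u ∈ S, u ≤ m → f u ≤ γ := by
    intro u huS hum
    have h8 : f u = liminf (fun k => G k u) atTop := ((hStend u huS).liminf_eq).symm
    rw [h8, hγ]
    exact liminf_le_liminf (Eventually.of_forall fun k => hGmono k hum)
      ((hStend u huS).isBoundedUnder_ge) hcobdd
  have hγ2 : ∀ w ∈ S, m ≤ w → γ ≤ f w := by
    intro w hwS hmw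
    have h8 : f w = liminf (fun k => G k w) atTop := ((hStend w hwS).liminf_eq).symm
    rw [h8, hγ]
    exact liminf_le_liminf (Eventually.of_forall fun k => hGmono k hmw) hbddlo
      ((hStend w hwS).isBoundedUnder_le.isCoboundedUnder_ge)
  have hγm : m ∈ S → γ = f m := fun h => (hStend m h).liminf_eq
  have hMf : ∀ x ∈ S, ∀ y ∈ S, x ≤ y → f x ≤ f y := fun x hx y hy hxy =>
    le_of_tendsto_of_tendsto' (hStend x hx) (hStend y hy) (fun k => hGmono k hxy)
  set A : Set ℝ := S ∩ Set.Ico 0 m with hA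
  set B : Set ℝ := S ∩ Set.Ioc m 1 with hB
  have hCγ : ∀ v ∈ A, ∀ u ∈ A, v < u → (f u - f v) / (u - v) ≤ (γ - f u) / (m - u) := by
    intro v hv u hu hvu
    have hum : u < m := hu.2.2
    have h9 : ∀ k, G k u + (G k u - G k v) / (u - v) * (m - u) ≤ G k m := by
      intro k
      have h10 := (hGconv k).slope_mono_adjacent (x := v) (y := u) (z := m)
        ⟨hv.2.1, hv.2.2.le⟩ hmIcc hvu hum
      have h11 := (le_div_iff₀ (by linarith : (0:ℝ) < m - u)).mp h10
      linarith
    have h12 : Tendsto (fun k => G k u + (G k u - G k v) / (u - v) * (m - u)) atTop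
        (nhds (f u + (f u - f v) / (u - v) * (m - u))) := by
      have t1 := hStend u hu.1
      have t2 := hStend v hv.1
      exact t1.add (((t1.sub t2).div_const _).mul_const _)
    have h13 : f u + (f u - f v) / (u - v) * (m - u) ≤ γ := by
      have h14 := liminf_le_liminf (Eventually.of_forall h9) h12.isBoundedUnder_ge hcobdd
      rwa [h12.liminf_eq] at h14
    rw [le_div_iff₀ (by linarith : (0:ℝ) < m - u)]
    linarith
  have hC3 : ∀ v ∈ A, ∀ u ∈ A, ∀ z ∈ A, v < u → u < z →
      (f u - f v) / (u - v) ≤ (f z - f u) / (z - u) := by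
    intro v hv u hu z hz hvu huz
    refine le_of_tendsto_of_tendsto'
      (((hStend u hu.1).sub (hStend v hv.1)).div_const _)
      (((hStend z hz.1).sub (hStend u hu.1)).div_const _)
      (fun k => (hGconv k).slope_mono_adjacent ⟨hv.2.1, hv.2.2.le⟩ ⟨hz.2.1, hz.2.2.le⟩ hvu huz)
  have hKγ : ∀ w ∈ B, ∀ z ∈ B, w < z → (f z - f w) / (z - w) ≤ (f w - γ) / (w - m) := by
    intro w hw z hz hwz
    have hmw : m < w := hw.2.1
    have h9 : ∀ k, G k m ≤ G k w - (G k z - G k w) / (z - w) * (w - m) := by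
      intro k
      have h10 := (hGconc k).slope_anti_adjacent (x := m) (y := w) (z := z)
        hmIcc' ⟨hz.2.1.le, hz.2.2⟩ hmw hwz
      have h11 := (le_div_iff₀ (by linarith : (0:ℝ) < w - m)).mp h10
      linarith
    have h12 : Tendsto (fun k => G k w - (G k z - G k w) / (z - w) * (w - m)) atTop
        (nhds (f w - (f z - f w) / (z - w) * (w - m))) := by
      have t1 := hStend w hw.1
      have t2 := hStend z hz.1
      exact t1.sub (((t2.sub t1).div_const _).mul_const _)
    have h13 : γ ≤ f w - (f z - f w) / (z - w) * (w - m) := by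
      have h14 := liminf_le_liminf (Eventually.of_forall h9) hbddlo
        h12.isBoundedUnder_le.isCoboundedUnder_ge
      rwa [h12.liminf_eq] at h14
    rw [le_div_iff₀ (by linarith : (0:ℝ) < w - m)]
    linarith
  have hK3 : ∀ y ∈ B, ∀ w ∈ B, ∀ z ∈ B, y < w → w < z →
      (f z - f w) / (z - w) ≤ (f w - f y) / (w - y) := by
    intro y hy w hw z hz hyw hwz
    refine le_of_tendsto_of_tendsto'
      (((hStend z hz.1).sub (hStend w hw.1)).div_const _)
      (((hStend w hw.1).sub (hStend y hy.1)).div_const _)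
      (fun k => (hGconc k).slope_anti_adjacent ⟨hy.2.1.le, hy.2.2⟩ ⟨hz.2.1.le, hz.2.2⟩ hyw hwz)
  have hg1 : ∃ g₁ : ℝ → ℝ, ConvexOn ℝ (Set.Icc 0 m) g₁ ∧ MonotoneOn g₁ (Set.Icc 0 m) ∧
      (∀ x ∈ Set.Icc 0 m, g₁ x ≤ γ) ∧ ∀ u ∈ A, g₁ u = f u := by
    rcases Set.eq_empty_or_nonempty A with he | he
    · exact ⟨fun _ => γ, convexOn_const _ (convex_Icc _ _), monotoneOn_const,
        fun x _ => le_rfl, by rw [he]; simp⟩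
    · refine sup_affine_interp he Set.inter_subset_right ?_ hCγ hC3 ?_
      · exact fun u hu => hγ1 u hu.1 hu.2.2.le
      · exact fun v hv u hu hvu => hMf v hv.1 u hu.1 hvu
  have hg2 : ∃ g₂ : ℝ → ℝ, ConcaveOn ℝ (Set.Icc m 1) g₂ ∧ MonotoneOn g₂ (Set.Icc m 1) ∧
      (∀ x ∈ Set.Icc m 1, γ ≤ g₂ x) ∧ ∀ w ∈ B, g₂ w = f w := by
    rcases Set.eq_empty_or_nonempty B with he | he
    · exact ⟨fun _ => γ, concaveOn_const _ (convex_Icc _ _), monotoneOn_const,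
        fun x _ => le_rfl, by rw [he]; simp⟩
    · have hh0 : Neg.neg '' B ⊆ Set.Ico (-1 : ℝ) (-m) := by
        rintro x ⟨w, hw, rfl⟩
        exact ⟨by linarith [hw.2.2], by linarith [hw.2.1]⟩
      have hh1 : ∀ u ∈ Neg.neg '' B, (fun x => - f (-x)) u ≤ -γ := by
        rintro u ⟨w, hw, rfl⟩
        simp only [neg_neg]
        have := hγ2 w hw.1 hw.2.1.le
        linarith
      have hh2 : ∀ v ∈ Neg.neg '' B, ∀ u ∈ Neg.neg '' B, v < u →
          ((fun x => - f (-x)) u - (fun x => - f (-x)) v) / (u - v)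
            ≤ (-γ - (fun x => - f (-x)) u) / (-m - u) := by
        rintro v ⟨z, hz, rfl⟩ u ⟨w, hw, rfl⟩ hlt
        have hwz : w < z := by linarith
        have h := hKγ w hw z hz hwz
        simp only [neg_neg]
        have e6 : (-f w - -f z) / (-w - -z) = (f z - f w) / (z - w) := by
          rw [show -w - -z = z - w by ring, show -f w - -f z = f z - f w by ring]
        have e7 : (-γ - -f w) / (-m - -w) = (f w - γ) / (w - m) := by
          rw [show -m - -w = w - m by ring, show -γ - -f w = f w - γ by ring]
        rw [e6, e7]
        exact h
      have hh3 : ∀ v ∈ Neg.neg '' B, ∀ u ∈ Neg.neg '' B, ∀ t ∈ Neg.neg '' B, v < u → u < t →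
          ((fun x => - f (-x)) u - (fun x => - f (-x)) v) / (u - v)
            ≤ ((fun x => - f (-x)) t - (fun x => - f (-x)) u) / (t - u) := by
        rintro v ⟨z, hz, rfl⟩ u ⟨w, hw, rfl⟩ t ⟨y, hy, rfl⟩ hlt1 hlt2
        have hyw : y < w := by linarith
        have hwz : w < z := by linarith
        have h := hK3 y hy w hw z hz hyw hwz
        simp only [neg_neg]
        have e6 : (-f w - -f z) / (-w - -z) = (f z - f w) / (z - w) := by
          rw [show -w - -z = z - w by ring, show -f w - -f z = f z - f w by ring]
        have e7 : (-f y - -f w) / (-y - -w) = (f w - f y) / (w - y) := by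
          rw [show -y - -w = w - y by ring, show -f y - -f w = f w - f y by ring]
        rw [e6, e7]
        exact h
      have hh4 : ∀ v ∈ Neg.neg '' B, ∀ u ∈ Neg.neg '' B, v ≤ u →
          (fun x => - f (-x)) v ≤ (fun x => - f (-x)) u := by
        rintro v ⟨z, hz, rfl⟩ u ⟨w, hw, rfl⟩ hle
        simp only [neg_neg]
        have := hMf w hw.1 z hz.1 (by linarith)
        linarith
      obtain ⟨gt, hconvt, hmonot, hlet, heqt⟩ :=
        sup_affine_interp (he.image _) hh0 hh1 hh2 hh3 hh4
      refine ⟨fun x => - gt (-x), ⟨convex_Icc m 1, ?_⟩, ?_, ?_, ?_⟩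
      · intro x hx y hy p q hp hq hpq
        have hx' : -x ∈ Set.Icc (-1 : ℝ) (-m) := ⟨by linarith [hx.2], by linarith [hx.1]⟩
        have hy' : -y ∈ Set.Icc (-1 : ℝ) (-m) := ⟨by linarith [hy.2], by linarith [hy.1]⟩
        have h15 := hconvt.2 hx' hy' hp hq hpq
        simp only [smul_eq_mul] at h15 ⊢
        have heqpt : p * (-x) + q * (-y) = -(p * x + q * y) := by ring
        rw [heqpt] at h15
        linarith
      · intro x hx y hy hxy
        have hx' : -x ∈ Set.Icc (-1 : ℝ) (-m) := ⟨by linarith [hx.2], by linarith [hx.1]⟩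
        have hy' : -y ∈ Set.Icc (-1 : ℝ) (-m) := ⟨by linarith [hy.2], by linarith [hy.1]⟩
        have := hmonot hy' hx' (by linarith)
        simp only
        linarith
      · intro x hx
        have hx' : -x ∈ Set.Icc (-1 : ℝ) (-m) := ⟨by linarith [hx.2], by linarith [hx.1]⟩
        have := hlet (-x) hx'
        simp only
        linarith
      · intro w hw
        have := heqt (-w) ⟨w, hw, rfl⟩
        simp only [neg_neg] at this
        simp only [this, neg_neg]
  obtain ⟨g₁, hg1c, hg1m, hg1le, hg1eq⟩ := hg1
  obtain ⟨g₂, hg2c, hg2m, hg2ge, hg2eq⟩ := hg2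
  set g : ℝ → ℝ := fun x => if x < m then g₁ x else if m < x then g₂ x else γ with hgdef
  have hgm : g m = γ := by simp [hgdef]
  have hglt : ∀ x, x < m → g x = g₁ x := fun x hx => by
    simp only [hgdef]; rw [if_pos hx]
  have hggt : ∀ x, m < x → g x = g₂ x := fun x hx => by
    simp only [hgdef]; rw [if_neg (by linarith), if_pos hx]
  have hgconv : ConvexOn ℝ (Set.Icc 0 m) g := by
    refine convexOn_raise_right hg1c hglt ?_
    rw [hgm]
    exact hg1le m hmIcc
  have hgconc : ConcaveOn ℝ (Set.Icc m 1) g := by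
    refine concaveOn_lower_left hg2c hggt ?_
    rw [hgm]
    exact hg2ge m hmIcc'
  have hbase1 : ∀ t, 0 ≤ t → t ≤ m → g t ≤ γ := by
    intro t ht0 htm
    rcases lt_or_eq_of_le htm with h' | h'
    · rw [hglt t h']; exact hg1le t ⟨ht0, htm⟩
    · rw [h', hgm]
  have hbase2 : ∀ t, m ≤ t → t ≤ 1 → γ ≤ g t := by
    intro t htm ht1
    rcases lt_or_eq_of_le htm with h' | h'
    · rw [hggt t h']; exact hg2ge t ⟨htm, ht1⟩
    · rw [← h', hgm]
  have hgmono : MonotoneOn g (Set.Icc 0 1) := by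
    intro x hx y hy hxy
    rcases lt_trichotomy y m with hy' | hy' | hy'
    · rw [hglt x (lt_of_le_of_lt hxy hy'), hglt y hy']
      exact hg1m ⟨hx.1, by linarith⟩ ⟨hy.1, hy'.le⟩ hxy
    · rw [hy', hgm]
      exact hbase1 x hx.1 (by linarith)
    · rcases lt_trichotomy x m with hx' | hx' | hx'
      · rw [hglt x hx']
        refine le_trans (hg1le x ⟨hx.1, hx'.le⟩) (hbase2 y hy'.le hy.2)
      · rw [hx', hgm]
        exact hbase2 y hy'.le hy.2
      · rw [hggt x hx', hggt y hy']
        exact hg2m ⟨hx'.le, hx.2⟩ ⟨hy'.le, hy.2⟩ hxy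
  have haegg : f =ᵐ[ν] g := by
    have hsub3 : {x | ¬ f x = g x} ⊆ Sᶜ := by
      intro x hx
      by_contra hxS
      rw [Set.notMem_compl_iff] at hxS
      apply hx
      rcases lt_trichotomy x m with h' | h' | h'
      · rw [hglt x h']
        exact (hg1eq x ⟨hxS, (hSsub hxS).1, h'⟩).symm
      · rw [h', hgm]
        exact (hγm (h' ▸ hxS)).symm
      · rw [hggt x h']
        exact (hg2eq x ⟨hxS, h', (hSsub hxS).2⟩).symm
    exact ae_iff.mpr (measure_mono_null hsub3 hSnull)
  exact ⟨g, ⟨hgconv, hgconc, hgmono⟩, haegg⟩
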